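/- For every real parameter φ > 0 and every real exponent ϑ > 0, the Hamacher scalar-multiplication membership function f_{φ,ϑ}(x) = ((1+(φ−1)x)^ϑ − (1−x)^ϑ)/((1+(φ−1)x)^ϑ + (φ−1)(1−x)^ϑ) has positive denominator for x ∈ [0,1], maps [0,1] into [0,1], and is monotone nondecreasing on [0,1]: if 0 ≤ x ≤ x' ≤ 1 then f_{φ,ϑ}(x) ≤ f_{φ,ϑ}(x'). -/
import Mathlib


/-- Hamacher scalar-multiplication membership function with parameters `φ` and `ϑ`. -/
noncomputable def hamacherScalarMem (φ ϑ x : ℝ) : ℝ :=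
  ((1 + (φ - 1) * x) ^ ϑ - (1 - x) ^ ϑ) /
    ((1 + (φ - 1) * x) ^ ϑ + (φ - 1) * (1 - x) ^ ϑ)

private lemma hamacher_aux (φ ϑ x : ℝ) (hφ : 0 < φ) (hϑ : 0 < ϑ)
    (hx0 : 0 ≤ x) (hx1 : x ≤ 1) :
    0 < (1 + (φ - 1) * x) ^ ϑ ∧ 0 ≤ (1 - x) ^ ϑ ∧
    (1 - x) ^ ϑ ≤ (1 + (φ - 1) * x) ^ ϑ ∧
    0 < (1 + (φ - 1) * x) ^ ϑ + (φ - 1) * (1 - x) ^ ϑ := by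
  have ha : (0:ℝ) < 1 + (φ - 1) * x := by
    rcases hx0.eq_or_lt with h | h
    · nlinarith
    · nlinarith [mul_pos hφ h]
  have hb : (0:ℝ) ≤ 1 - x := by linarith
  have hba : 1 - x ≤ 1 + (φ - 1) * x := by nlinarith
  have hA : 0 < (1 + (φ - 1) * x) ^ ϑ := Real.rpow_pos_of_pos ha ϑ
  have hB : 0 ≤ (1 - x) ^ ϑ := Real.rpow_nonneg hb ϑ
  have hBA : (1 - x) ^ ϑ ≤ (1 + (φ - 1) * x) ^ ϑ :=
    Real.rpow_le_rpow hb hba hϑ.le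
  refine ⟨hA, hB, hBA, ?_⟩
  rcases le_or_gt φ 1 with h | h
  · nlinarith [mul_pos hφ hA]
  · nlinarith

theorem hamacherScalarMem_denom_pos_maps_Icc_monotone (φ ϑ : ℝ) (hφ : 0 < φ) (hϑ : 0 < ϑ) :
    (∀ x : ℝ, x ∈ Set.Icc (0:ℝ) 1 →
      0 < (1 + (φ - 1) * x) ^ ϑ + (φ - 1) * (1 - x) ^ ϑ ∧
      hamacherScalarMem φ ϑ x ∈ Set.Icc (0:ℝ) 1) ∧
    (∀ x x' : ℝ, 0 ≤ x → x ≤ x' → x' ≤ 1 →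
      hamacherScalarMem φ ϑ x ≤ hamacherScalarMem φ ϑ x') := by
  constructor
  · rintro x ⟨hx0, hx1⟩
    obtain ⟨hA, hB, hBA, hD⟩ := hamacher_aux φ ϑ x hφ hϑ hx0 hx1
    refine ⟨hD, ?_, ?_⟩
    · exact div_nonneg (by linarith) hD.le
    · rw [hamacherScalarMem, div_le_one hD]
      nlinarith [mul_nonneg hφ.le hB]
  · intro x x' hx0 hxx hx1
    have hx0' : 0 ≤ x' := le_trans hx0 hxx
    have hx1' : x ≤ 1 := le_trans hxx hx1
    obtain ⟨hA, hB, hBA, hD⟩ := hamacher_aux φ ϑ x hφ hϑ hx0 hx1'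
    obtain ⟨hA', hB', hBA', hD'⟩ := hamacher_aux φ ϑ x' hφ hϑ hx0' hx1
    rw [hamacherScalarMem, hamacherScalarMem, div_le_div_iff₀ hD hD']
    -- key: (1+(φ-1)x)(1-x') ≤ (1+(φ-1)x')(1-x)
    have ha : (0:ℝ) ≤ 1 + (φ - 1) * x := by nlinarith
    have hb : (0:ℝ) ≤ 1 - x := by linarith
    have ha' : (0:ℝ) ≤ 1 + (φ - 1) * x' := by nlinarith
    have hb' : (0:ℝ) ≤ 1 - x' := by linarith
    have hkey : (1 + (φ - 1) * x) * (1 - x') ≤ (1 + (φ - 1) * x') * (1 - x) := by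
      nlinarith
    have hkeyp : ((1 + (φ - 1) * x) * (1 - x')) ^ ϑ ≤
        ((1 + (φ - 1) * x') * (1 - x)) ^ ϑ :=
      Real.rpow_le_rpow (mul_nonneg ha hb') hkey hϑ.le
    rw [Real.mul_rpow ha hb', Real.mul_rpow ha' hb] at hkeyp
    nlinarith [mul_nonneg hφ.le (sub_nonneg.2 hkeyp)]
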